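/- Let n be a positive integer and let σ be the 2n-cycle (0 1 ... 2n−1) on ℤ/2n, and φ a fixed-point-free involution of ℤ/2n. Let d divide n. Then the partition of ℤ/2n into the 2d residue classes modulo 2d is an imprimitivity system (block system) for the group generated by σ and φ if and only if φ(i + 2d) ≡ φ(i) (mod 2d) for all i. -/

import Mathlib

theorem imprimitivity_criterion (n d : ℕ) (hn : 0 < n) (hd : 0 < d) (hdvd : d ∣ n)
    (σ φ : Equiv.Perm (ZMod (2 * n)))
    (hσ : ∀ x : ZMod (2 * n), σ x = x + 1)
    (hinv : ∀ x : ZMod (2 * n), φ (φ x) = x)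
    (hfpf : ∀ x : ZMod (2 * n), φ x ≠ x) :
    (∀ g ∈ Subgroup.closure ({σ, φ} : Set (Equiv.Perm (ZMod (2 * n)))),
        ∀ x y : ZMod (2 * n),
          ZMod.castHom (mul_dvd_mul_left 2 hdvd) (ZMod (2 * d)) x =
            ZMod.castHom (mul_dvd_mul_left 2 hdvd) (ZMod (2 * d)) y →
          ZMod.castHom (mul_dvd_mul_left 2 hdvd) (ZMod (2 * d)) (g x) =
            ZMod.castHom (mul_dvd_mul_left 2 hdvd) (ZMod (2 * d)) (g y)) ↔
    (∀ i : ZMod (2 * n),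
        ZMod.castHom (mul_dvd_mul_left 2 hdvd) (ZMod (2 * d)) (φ (i + (2 * d : ℕ))) =
          ZMod.castHom (mul_dvd_mul_left 2 hdvd) (ZMod (2 * d)) (φ i)) := by
  haveI h2d : NeZero (2 * d) := ⟨by omega⟩
  haveI h2n : NeZero (2 * n) := ⟨by omega⟩
  set π := ZMod.castHom (mul_dvd_mul_left 2 hdvd) (ZMod (2 * d)) with hπdef
  constructor
  · intro H i
    refine H φ (Subgroup.subset_closure (by simp)) _ _ ?_
    rw [map_add, map_natCast, ZMod.natCast_self, add_zero]
  · intro hφ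
    have key : ∀ x : ZMod (2 * n), π (((π x).val : ZMod (2 * n))) = π x := by
      intro x
      rw [map_natCast]
      exact ZMod.natCast_rightInverse _
    set P : Equiv.Perm (ZMod (2 * n)) → Prop := fun g =>
      ∀ x y, π x = π y → π (g x) = π (g y) with hPdef
    have hmul : ∀ g h, P g → P h → P (g * h) := by
      intro g h hg hh x y hxy
      exact hg _ _ (hh _ _ hxy)
    have hinvP : ∀ g, P g → P g⁻¹ := by
      intro g hg x y hxy
      set f : ZMod (2 * d) → ZMod (2 * d) := fun z => π (g ((z.val : ZMod (2 * n)))) with hf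
      have hfx : ∀ x, π (g x) = f (π x) := fun x => (hg _ _ (key x)).symm
      have hfsurj : Function.Surjective f := by
        intro z
        have hw : π ((z.val : ZMod (2 * n))) = z := by
          rw [map_natCast]; exact ZMod.natCast_rightInverse _
        exact ⟨π (g⁻¹ ((z.val : ZMod (2 * n)))), by
          rw [← hfx, Equiv.Perm.inv_def, Equiv.apply_symm_apply, hw]⟩
      have hfinj : Function.Injective f := Finite.injective_iff_surjective.mpr hfsurj
      apply hfinj
      rw [← hfx, ← hfx, Equiv.Perm.inv_def, Equiv.apply_symm_apply, Equiv.apply_symm_apply, hxy]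
    have hPσ : P σ := by
      intro x y hxy
      rw [hσ, hσ, map_add, map_add, hxy]
    have hPφ : P φ := by
      have aux : ∀ (k : ℕ) (i : ZMod (2 * n)),
          π (φ (i + ((k * (2 * d) : ℕ) : ZMod (2 * n)))) = π (φ i) := by
        intro k
        induction k with
        | zero => intro i; simp
        | succ k ih =>
          intro i
          have hre : i + (((k + 1) * (2 * d) : ℕ) : ZMod (2 * n)) =
              (i + ((k * (2 * d) : ℕ) : ZMod (2 * n))) + ((2 * d : ℕ) : ZMod (2 * n)) := by
            push_cast; ring
          rw [hre, hφ, ih]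
      intro x y hxy
      have h0 : ((x - y).val : ZMod (2 * d)) = 0 := by
        rw [ZMod.natCast_val, ← ZMod.castHom_apply (h := mul_dvd_mul_left 2 hdvd), ← hπdef,
          map_sub, hxy, sub_self]
      obtain ⟨k, hk⟩ := (ZMod.natCast_eq_zero_iff _ _).mp h0
      have hx : x = y + ((k * (2 * d) : ℕ) : ZMod (2 * n)) := by
        have h1 : (((x - y).val : ℕ) : ZMod (2 * n)) = x - y := ZMod.natCast_rightInverse _
        rw [show k * (2 * d) = (x - y).val from by rw [hk]; ring, h1]
        ring
      rw [hx, aux k y]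
    let S : Subgroup (Equiv.Perm (ZMod (2 * n))) :=
      { carrier := {g | P g}
        one_mem' := by intro x y h; simpa using h
        mul_mem' := fun hg hh => hmul _ _ hg hh
        inv_mem' := fun hg => hinvP _ hg }
    intro g hg
    have hsub : ({σ, φ} : Set (Equiv.Perm (ZMod (2 * n)))) ⊆ S := by
      intro a ha
      rcases ha with rfl | rfl
      · exact hPσ
      · exact hPφ
    exact (Subgroup.closure_le S).mpr hsub hg
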